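/- In any m-dimensional abstract rigidity matroid on K(V), for every U ⊆ V the rank of K(U) equals binom(|U|,2) if |U| ≤ m+1 and equals m|U| − binom(m+1,2) if |U| ≥ m+1. -/

import Mathlib

open Matroid Set

/-- A circuit of a matroid: a minimal dependent set. -/
def Matroid.IsCircuit' {α : Type*} (M : Matroid α) (C : Set α) : Prop :=
  M.Dep C ∧ ∀ D, D ⊂ C → M.Indep D

/-- A cocircuit: a circuit of the dual matroid. -/
def Matroid.IsCocircuit' {α : Type*} (M : Matroid α) (C : Set α) : Prop :=
  M✶.IsCircuit' C

/-- A hyperplane: a maximal subset of the ground set not containing a basis. -/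
def Matroid.IsHyperplane {α : Type*} (M : Matroid α) (H : Set α) : Prop :=
  H ⊆ M.E ∧ (¬ ∃ B ⊆ H, M.IsBase B) ∧
    ∀ H', H ⊂ H' → H' ⊆ M.E → ∃ B ⊆ H', M.IsBase B

/-- The rank of a set: the size of a largest independent subset. -/
noncomputable def Matroid.rk {α : Type*} (M : Matroid α) (X : Set α) : ℕ :=
  sSup {n | ∃ I ⊆ X, M.Indep I ∧ I.ncard = n}

/-- `cK U` is the edge set of the complete graph on the vertex set `U`. -/
def cK {V : Type*} (U : Set V) : Set (Sym2 V) :=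
  {e | ¬ e.IsDiag ∧ ∀ v ∈ e, v ∈ U}

/-- The support (set of endpoints) of an edge set. -/
def supp {V : Type*} (E : Set (Sym2 V)) : Set V := {v | ∃ e ∈ E, v ∈ e}

/-- An edge set is rigid if its closure is the complete graph on its support. -/
def Rigid {V : Type*} (A : Matroid (Sym2 V)) (E : Set (Sym2 V)) : Prop :=
  A.closure E = cK (supp E)

/-- `A` is an `m`-dimensional abstract rigidity matroid on `K(W)`. -/
def IsARMOn {V : Type*} (m : ℕ) (W : Set V) (A : Matroid (Sym2 V)) : Prop :=
  A.E = cK W ∧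
  (∀ E F : Set (Sym2 V), E ⊆ cK W → F ⊆ cK W →
    (supp E ∩ supp F).ncard < m →
    A.closure (E ∪ F) ⊆ cK (supp E) ∪ cK (supp F)) ∧
  (∀ E F : Set (Sym2 V), E ⊆ cK W → F ⊆ cK W →
    Rigid A E → Rigid A F → m ≤ (supp E ∩ supp F).ncard →
    Rigid A (E ∪ F))

/-- The star of a vertex: all edges containing it. -/
def starv {V : Type*} (v : V) : Set (Sym2 V) := {e | ¬ e.IsDiag ∧ v ∈ e}

/-- `C` is a vertex star minus `m-1` edges. -/
def IsStarMinus {V : Type*} (m : ℕ) (C : Set (Sym2 V)) : Prop :=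
  ∃ v : V, ∃ D ⊆ starv v, D.ncard = m - 1 ∧ C = starv v \ D

/-- The valence (degree) of a vertex in an edge set. -/
noncomputable def valence {V : Type*} (C : Set (Sym2 V)) (v : V) : ℕ :=
  {e ∈ C | v ∈ e}.ncard

/-- `bigstar V' = K(V) \ K(V \ V')`. -/
def bigstar {V : Type*} (V' : Set V) : Set (Sym2 V) :=
  cK (univ : Set V) \ cK (V'ᶜ)

/-- The family `H_m(V)` of unions of two complete graphs covering `V` and
meeting in `m-1` vertices. -/
def HmFam (m : ℕ) (V : Type*) : Set (Set (Sym2 V)) :=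
  {H | ∃ V₁ V₂ : Set V, V₁ ∪ V₂ = univ ∧ (V₁ ∩ V₂).ncard = m - 1 ∧
    ¬ V₁ ⊆ V₂ ∧ ¬ V₂ ⊆ V₁ ∧ H = cK V₁ ∪ cK V₂}

/-- The family `H_m^{(1)}(K(X))` of sets `Δ_v^A` relative to a vertex set `X`. -/
def Hm1Fam {V : Type*} (m : ℕ) (X : Set V) : Set (Set (Sym2 V)) :=
  {H | ∃ v ∈ X, ∃ A ⊆ X \ {v}, A.ncard = m - 1 ∧
    H = cK ({v} ∪ A) ∪ cK (X \ {v})}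


section RkLemmas

variable {α : Type*} [Finite α] {M : Matroid α} {I J X Y : Set α} {e : α}

lemma indep_ncard_le_of_basis (h : M.IsBasis I X) (hJ : M.Indep J) (hJX : J ⊆ X) :
    J.ncard ≤ I.ncard := by
  obtain ⟨J', hJ', hJJ'⟩ := hJ.subset_isBasis_of_subset hJX h.subset_ground
  have h1 : J.ncard ≤ J'.ncard := Set.ncard_le_ncard hJJ' J'.toFinite
  have h2 : J'.encard = I.encard := hJ'.encard_eq_encard h
  have : J'.ncard = I.ncard := by rw [Set.ncard_def, h2, ← Set.ncard_def]
  omega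

lemma rk_eq_ncard_of_basis (h : M.IsBasis I X) : M.rk X = I.ncard := by
  have hmem : I.ncard ∈ {n | ∃ I ⊆ X, M.Indep I ∧ I.ncard = n} :=
    ⟨I, h.subset, h.indep, rfl⟩
  refine le_antisymm (csSup_le ⟨_, hmem⟩ ?_) (le_csSup ⟨I.ncard, ?_⟩ hmem)
  · rintro n ⟨J, hJX, hJ, rfl⟩; exact indep_ncard_le_of_basis h hJ hJX
  · rintro n ⟨J, hJX, hJ, rfl⟩; exact indep_ncard_le_of_basis h hJ hJX

lemma Matroid.Indep.rk_self (h : M.Indep X) : M.rk X = X.ncard :=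
  rk_eq_ncard_of_basis h.isBasis_self

lemma rk_closure_eq' (hX : X ⊆ M.E) : M.rk (M.closure X) = M.rk X := by
  obtain ⟨I, hI⟩ := M.exists_isBasis X
  rw [rk_eq_ncard_of_basis hI, rk_eq_ncard_of_basis hI.isBasis_closure_right]

lemma rk_insert_of_not_mem_closure' (hX : X ⊆ M.E) (he : e ∈ M.E)
    (h : e ∉ M.closure X) : M.rk (insert e X) = M.rk X + 1 := by
  obtain ⟨I, hI⟩ := M.exists_isBasis X
  have hclI : M.closure I = M.closure X := hI.closure_eq_closure
  have heI : e ∉ I := fun heI => h (hclI ▸ M.subset_closure I hI.indep.subset_ground heI)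
  have hind : M.Indep (insert e I) := by
    rw [hI.indep.insert_indep_iff_of_notMem heI]
    exact ⟨he, fun hc => h (hclI ▸ hc)⟩
  have hbas : M.IsBasis (insert e I) (insert e X) := by
    refine hind.isBasis_of_subset_of_subset_closure (insert_subset_insert hI.subset) ?_
    refine insert_subset (M.subset_closure _ hind.subset_ground (mem_insert _ _)) ?_
    exact hI.subset_closure.trans (M.closure_subset_closure (subset_insert e I))
  rw [rk_eq_ncard_of_basis hI, rk_eq_ncard_of_basis hbas,
    Set.ncard_insert_of_notMem heI]

end RkLemmas

section CkLemmas

/-- The set of edges joining `v` to the vertices in `W`. -/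
def vedges {V : Type*} (v : V) (W : Set V) : Set (Sym2 V) :=
  (fun w => s(v, w)) '' W

variable {V : Type*} {U U' W : Set V} {v u w : V} {E F : Set (Sym2 V)} {e : Sym2 V}

lemma mk_mem_cK (h : u ≠ w) (hu : u ∈ U) (hw : w ∈ U) : s(u, w) ∈ cK U :=
  ⟨by simp [Sym2.mk_isDiag_iff, h], fun x hx => by
    rcases Sym2.mem_iff.mp hx with rfl | rfl <;> assumption⟩

lemma mem_cK_elim (he : e ∈ cK U) :
    ∃ u w, u ≠ w ∧ u ∈ U ∧ w ∈ U ∧ e = s(u, w) := by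
  induction e with
  | _ x y =>
    exact ⟨x, y, fun h => he.1 (Sym2.mk_isDiag_iff.mpr h),
      he.2 x (by simp), he.2 y (by simp), rfl⟩

lemma cK_mono (h : U ⊆ U') : cK U ⊆ cK U' :=
  fun _ he => ⟨he.1, fun x hx => h (he.2 x hx)⟩

lemma cK_subset_univ : cK U ⊆ cK (univ : Set V) := cK_mono (subset_univ U)

lemma cK_empty : cK (∅ : Set V) = ∅ := by
  ext e
  simp only [mem_empty_iff_false, iff_false]
  intro he
  obtain ⟨u, w, _, hu, _, _⟩ := mem_cK_elim he
  exact hu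

lemma cK_eq_empty_of_ncard_le_one [Fintype V] (h : U.ncard ≤ 1) : cK U = ∅ := by
  ext e
  simp only [mem_empty_iff_false, iff_false]
  intro he
  obtain ⟨u, w, huw, hu, hw, _⟩ := mem_cK_elim he
  have h2 : ({u, w} : Set V).ncard = 2 := Set.ncard_pair huw
  have := Set.ncard_le_ncard (Set.insert_subset hu (Set.singleton_subset_iff.mpr hw))
    U.toFinite
  omega

lemma supp_empty : supp (∅ : Set (Sym2 V)) = ∅ := by
  ext v; simp [supp]

lemma supp_union : supp (E ∪ F) = supp E ∪ supp F := by
  ext x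
  constructor
  · rintro ⟨e, (he | he), hx⟩
    exacts [Or.inl ⟨e, he, hx⟩, Or.inr ⟨e, he, hx⟩]
  · rintro (⟨e, he, hx⟩ | ⟨e, he, hx⟩)
    exacts [⟨e, Or.inl he, hx⟩, ⟨e, Or.inr he, hx⟩]

lemma supp_subset (h : E ⊆ cK U) : supp E ⊆ U := by
  rintro x ⟨e, he, hx⟩
  exact (h he).2 x hx

lemma supp_cK_eq [Fintype V] (h : 2 ≤ U.ncard) : supp (cK U) = U := by
  refine (supp_subset Subset.rfl).antisymm fun x hx => ?_
  have h1 : 1 ≤ (U \ {x}).ncard := by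
    have := Set.ncard_diff_singleton_add_one hx U.toFinite
    omega
  obtain ⟨y, hy⟩ := Set.nonempty_of_ncard_ne_zero (s := U \ {x}) (by omega)
  exact ⟨s(y, x), mk_mem_cK (fun h => hy.2 (h ▸ rfl)) hy.1 hx, by simp⟩

lemma mem_vedges : e ∈ vedges v W ↔ ∃ w ∈ W, e = s(v, w) := by
  simp [vedges, eq_comm]

lemma vedges_subset_cK (hv : v ∉ W) : vedges v W ⊆ cK (insert v W) := by
  rintro e ⟨w, hw, rfl⟩
  exact mk_mem_cK (fun h => hv (h ▸ hw)) (mem_insert _ _) (Or.inr hw)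

lemma ncard_vedges [Fintype V] : (vedges v W).ncard = W.ncard := by
  rw [vedges, Set.ncard_image_of_injective _ fun a b hab => Sym2.congr_right.mp hab]

lemma v_mem_of_mem_vedges (he : e ∈ vedges v W) : v ∈ e := by
  obtain ⟨w, _, rfl⟩ := mem_vedges.mp he; simp

lemma supp_vedges_subset : supp (vedges v W) ⊆ insert v W := by
  rintro x ⟨e, he, hx⟩
  obtain ⟨w, hw, rfl⟩ := mem_vedges.mp he
  rcases Sym2.mem_iff.mp hx with rfl | rfl
  · exact mem_insert _ _
  · exact Or.inr hw

lemma cK_insert (hv : v ∉ U) : cK (insert v U) = cK U ∪ vedges v U := by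
  ext e
  constructor
  · intro he
    obtain ⟨x, y, hxy, hx, hy, rfl⟩ := mem_cK_elim he
    rcases hx with rfl | hx
    · rcases hy with rfl | hy
      · exact absurd rfl hxy
      · exact Or.inr (mem_vedges.mpr ⟨y, hy, rfl⟩)
    · rcases hy with rfl | hy
      · exact Or.inr (mem_vedges.mpr ⟨x, hx, Sym2.eq_swap⟩)
      · exact Or.inl (mk_mem_cK hxy hx hy)
  · rintro (he | he)
    · exact cK_mono (subset_insert _ _) he
    · exact vedges_subset_cK hv he

lemma ncard_cK [Fintype V] (U : Set V) : (cK U).ncard = U.ncard.choose 2 := by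
  induction U, U.toFinite using Set.Finite.induction_on with
  | empty => simp [cK_empty]
  | insert hv hfin ih =>
    rename_i v U
    rw [cK_insert hv, Set.ncard_union_eq ?_ (Set.toFinite _) (Set.toFinite _),
      ncard_vedges, ih, Set.ncard_insert_of_notMem hv]
    · rw [Nat.choose_succ_succ (U.ncard) 1, Nat.choose_one_right, Nat.add_comm]
    · rw [Set.disjoint_left]
      intro e he hev
      have := v_mem_of_mem_vedges hev
      exact hv ((he.2 v this))

end CkLemmas

section ARM

variable {V : Type*} [Fintype V] [DecidableEq V] {m : ℕ} {A : Matroid (Sym2 V)}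
  {U U₀ W : Set V} {v : V} {E : Set (Sym2 V)}

lemma closure_subset_cK_supp (hm : 0 < m) (hA : IsARMOn m (univ : Set V) A)
    (hE : E ⊆ cK (univ : Set V)) : A.closure E ⊆ cK (supp E) := by
  have h := hA.2.1 E ∅ hE (empty_subset _) (by simp [supp_empty, hm])
  rw [union_empty] at h
  rwa [supp_empty, cK_empty, union_empty] at h

lemma rigid_cK (hm : 0 < m) (hA : IsARMOn m (univ : Set V) A) (U : Set V) :
    Rigid A (cK U) := by
  unfold Rigid
  refine (closure_subset_cK_supp hm hA cK_subset_univ).antisymm ?_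
  rcases le_or_gt 2 U.ncard with h2 | h2
  · rw [supp_cK_eq h2]
    exact A.subset_closure (cK U) (by rw [hA.1]; exact cK_subset_univ)
  · have hU : cK U = ∅ := cK_eq_empty_of_ncard_le_one (by omega)
    rw [hU, supp_empty, cK_empty]
    exact empty_subset _

lemma indep_cK (hm : 0 < m) (hA : IsARMOn m (univ : Set V) A)
    (hU : U.ncard ≤ m + 1) : A.Indep (cK U) := by
  rw [Matroid.indep_iff_forall_notMem_closure_diff
    (by rw [hA.1]; exact cK_subset_univ)]
  intro e he
  obtain ⟨u, w, huw, hu, hw, rfl⟩ := mem_cK_elim he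
  have hsub : cK U \ {s(u, w)} ⊆ cK (U \ {u}) ∪ cK (U \ {w}) := by
    rintro f ⟨hf, hfe⟩
    by_cases huf : u ∈ f
    · by_cases hwf : w ∈ f
      · exact absurd ((Sym2.mem_and_mem_iff huw).mp ⟨huf, hwf⟩) hfe
      · exact Or.inr ⟨hf.1, fun x hx => ⟨hf.2 x hx, fun hxw => hwf (hxw ▸ hx)⟩⟩
    · exact Or.inl ⟨hf.1, fun x hx => ⟨hf.2 x hx, fun hxu => huf (hxu ▸ hx)⟩⟩
  have hsmall : (supp (cK (U \ {u})) ∩ supp (cK (U \ {w}))).ncard < m := by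
    have hss : supp (cK (U \ {u})) ∩ supp (cK (U \ {w})) ⊆ U \ {u, w} := by
      intro x hx
      have h1 := supp_subset (U := U \ {u}) Subset.rfl hx.1
      have h2 := supp_subset (U := U \ {w}) Subset.rfl hx.2
      exact ⟨h1.1, by rintro (rfl | rfl); exacts [h1.2 rfl, h2.2 rfl]⟩
    have hle := Set.ncard_le_ncard hss (Set.toFinite _)
    have hcd : (U \ {u, w}).ncard = U.ncard - 2 := by
      rw [Set.ncard_diff (by rintro x (rfl | rfl); exacts [hu, hw]) (Set.toFinite _),
        Set.ncard_pair huw]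
    have hU2 : 2 ≤ U.ncard := by
      have := Set.ncard_le_ncard
        (Set.insert_subset hu (Set.singleton_subset_iff.mpr hw)) U.toFinite
      rw [Set.ncard_pair huw] at this
      omega
    omega
  intro hmem
  have hcl : A.closure (cK U \ {s(u, w)}) ⊆
      cK (supp (cK (U \ {u}))) ∪ cK (supp (cK (U \ {w}))) := by
    refine (A.closure_subset_closure hsub).trans ?_
    exact hA.2.1 _ _ cK_subset_univ cK_subset_univ hsmall
  rcases hcl hmem with h | h
  · have := supp_subset (U := U \ {u}) Subset.rfl (h.2 u (by simp))
    exact this.2 rfl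
  · have := supp_subset (U := U \ {w}) Subset.rfl (h.2 w (by simp))
    exact this.2 rfl

lemma rk_cK_step (hm : 0 < m) (hA : IsARMOn m (univ : Set V) A)
    (hv : v ∉ U₀) (hU₀ : m + 1 ≤ U₀.ncard) :
    A.rk (cK (insert v U₀)) = A.rk (cK U₀) + m := by
  obtain ⟨W, hWU₀, hWm⟩ := Set.exists_subset_card_eq (s := U₀) (n := m) (by omega)
  have hvW : v ∉ W := fun h => hv (hWU₀ h)
  -- adding the edges from v to a small T one at a time
  have hadd : ∀ T : Set V, T.Finite → T ⊆ U₀ → T.ncard ≤ m →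
      A.rk (cK U₀ ∪ vedges v T) = A.rk (cK U₀) + T.ncard := by
    intro T hTfin
    induction T, hTfin using Set.Finite.induction_on with
    | empty =>
      intro _ _
      simp [vedges, Set.ncard_empty]
    | insert hwT hTfin ih =>
      rename_i w T
      intro hsub hcard
      have hwU₀ : w ∈ U₀ := hsub (mem_insert _ _)
      have hTU₀ : T ⊆ U₀ := (subset_insert _ _).trans hsub
      have hvT : v ∉ T := fun h => hv (hTU₀ h)
      have hcardT : T.ncard + 1 = (insert w T).ncard :=
        (Set.ncard_insert_of_notMem hwT (Set.toFinite _)).symm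
      have hXE : cK U₀ ∪ vedges v T ⊆ A.E := by
        rw [hA.1]
        exact union_subset cK_subset_univ
          ((vedges_subset_cK hvT).trans cK_subset_univ)
      have hnotcl : s(v, w) ∉ A.closure (cK U₀ ∪ vedges v T) := by
        have hsmall : (supp (cK U₀) ∩ supp (vedges v T)).ncard < m := by
          have hss : supp (cK U₀) ∩ supp (vedges v T) ⊆ T := by
            intro x hx
            have h1 := supp_subset (U := U₀) Subset.rfl hx.1
            rcases supp_vedges_subset hx.2 with rfl | h2
            · exact absurd h1 hv
            · exact h2
          have := Set.ncard_le_ncard hss (Set.toFinite _)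
          omega
        have hcl := hA.2.1 (cK U₀) (vedges v T) cK_subset_univ
          ((vedges_subset_cK hvT).trans cK_subset_univ) hsmall
        intro hmem
        rcases hcl hmem with h | h
        · exact hv (supp_subset (U := U₀) Subset.rfl (h.2 v (by simp)))
        · rcases supp_vedges_subset (h.2 w (by simp)) with rfl | hwT'
          · exact hv hwU₀
          · exact hwT hwT'
      have hvw : s(v, w) ∈ A.E := by
        rw [hA.1]
        exact mk_mem_cK (fun h => hv (h ▸ hwU₀)) (mem_univ _) (mem_univ _)
      have hins : cK U₀ ∪ vedges v (insert w T) =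
          insert s(v, w) (cK U₀ ∪ vedges v T) := by
        rw [vedges, Set.image_insert_eq, Set.union_insert]
        rfl
      rw [hins, rk_insert_of_not_mem_closure' hXE hvw hnotcl,
        ih hTU₀ (by omega), ← hcardT]
      omega
  have hrkW : A.rk (cK U₀ ∪ vedges v W) = A.rk (cK U₀) + m := by
    rw [hadd W W.toFinite hWU₀ (by omega), hWm]
  -- rigidity: the closure of the augmented set is all of cK (insert v U₀)
  have hrig : A.closure (cK U₀ ∪ vedges v W) = cK (insert v U₀) := by
    have h1 : Rigid A (cK U₀) := rigid_cK hm hA U₀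
    have h2 : Rigid A (cK (insert v W)) := rigid_cK hm hA (insert v W)
    have hsupp1 : supp (cK U₀) = U₀ := supp_cK_eq (by omega)
    have hsupp2 : supp (cK (insert v W)) = insert v W := by
      refine supp_cK_eq ?_
      rw [Set.ncard_insert_of_notMem hvW (Set.toFinite _), hWm]
      omega
    have hWcap : U₀ ∩ insert v W = W := by
      apply Set.Subset.antisymm
      · rintro x ⟨hx1, rfl | hx2⟩
        · exact absurd hx1 hv
        · exact hx2
      · exact fun x hx => ⟨hWU₀ hx, Or.inr hx⟩
    have hbig : m ≤ (supp (cK U₀) ∩ supp (cK (insert v W))).ncard := by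
      rw [hsupp1, hsupp2, hWcap, hWm]
    have h3 := hA.2.2 (cK U₀) (cK (insert v W)) cK_subset_univ cK_subset_univ
      h1 h2 hbig
    have hUeq : cK U₀ ∪ cK (insert v W) = cK U₀ ∪ vedges v W := by
      rw [cK_insert hvW]
      rw [← union_assoc, union_eq_self_of_subset_right (cK_mono hWU₀)]
    have hVeq : supp (cK U₀ ∪ cK (insert v W)) = insert v U₀ := by
      rw [supp_union, hsupp1, hsupp2, Set.union_insert,
        union_eq_self_of_subset_right hWU₀]
    unfold Rigid at h3
    rw [← hUeq, h3, hVeq]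
  have hsubE : cK U₀ ∪ vedges v W ⊆ A.E := by
    rw [hA.1]
    exact union_subset cK_subset_univ ((vedges_subset_cK hvW).trans cK_subset_univ)
  rw [← hrig, rk_closure_eq' hsubE, hrkW]

lemma two_mul_choose_two (m : ℕ) : 2 * ((m + 1).choose 2) = (m + 1) * m := by
  induction m with
  | zero => simp
  | succ n ih =>
    rw [Nat.choose_succ_succ (n + 1) 1, Nat.choose_one_right, Nat.mul_add, ih]
    ring

end ARM

theorem stmt_9 {V : Type*} [Fintype V] [DecidableEq V] (m : ℕ) (hm : 0 < m)
    (A : Matroid (Sym2 V)) (hA : IsARMOn m (univ : Set V) A)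
    (hV : m + 1 ≤ Fintype.card V) (U : Set V) :
    (U.ncard ≤ m + 1 → A.rk (cK U) = (U.ncard).choose 2) ∧
    (m + 1 ≤ U.ncard → A.rk (cK U) = m * U.ncard - (m + 1).choose 2) := by
  have hsmall : ∀ U' : Set V, U'.ncard ≤ m + 1 → A.rk (cK U') = (U'.ncard).choose 2 := by
    intro U' hU'
    rw [(indep_cK hm hA hU').rk_self, ncard_cK]
  refine ⟨hsmall U, ?_⟩
  have htc := two_mul_choose_two m
  have hbig : ∀ n : ℕ, m + 1 ≤ n → ∀ U' : Set V, U'.ncard = n →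
      A.rk (cK U') = m * n - (m + 1).choose 2 := by
    intro n hn
    induction n, hn using Nat.le_induction with
    | base =>
      intro U' hU'
      rw [hsmall U' (le_of_eq hU'), hU']
      have hcomm : m * (m + 1) = (m + 1) * m := Nat.mul_comm _ _
      omega
    | succ n hn ih =>
      intro U' hU'
      obtain ⟨v, hv⟩ := Set.nonempty_of_ncard_ne_zero (s := U') (by omega)
      have hU₀ : (U' \ {v}).ncard = n := by
        have := Set.ncard_diff_singleton_add_one hv U'.toFinite
        omega
      have hins : insert v (U' \ {v}) = U' := by
        rw [Set.insert_diff_singleton, Set.insert_eq_self.mpr hv]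
      have hstep := rk_cK_step hm hA (fun h => h.2 rfl) (hU₀ ▸ hn)
      rw [hins] at hstep
      rw [hstep, ih (U' \ {v}) hU₀]
      have hmn : m * (m + 1) ≤ m * n := Nat.mul_le_mul_left m (by omega)
      have hms : m * (n + 1) = m * n + m := by ring
      have hcomm : m * (m + 1) = (m + 1) * m := Nat.mul_comm _ _
      omega
  exact fun h => hbig U.ncard h U rfl
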